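/- Let λ ∈ ℝ, α ∈ ℝ, and n ∈ ℕ with n ≥ 1. Then for every x ∈ ℝ: (d/dx) L^{(α)}_{n,λ}(x) = (1 + x·λ)·(d/dx) L^{(α)}_{n−1,λ}(x) − L^{(α)}_{n−1,λ}(x). -/

import Mathlib

/-- The degenerate falling factorial `(1)_{m,λ} = ∏_{j=0}^{m-1} (1 - jλ)`. -/
noncomputable def degFall (lam : ℝ) (m : ℕ) : ℝ :=
  ∏ j ∈ Finset.range m, (1 - (j : ℝ) * lam)

/-- Generalized binomial coefficient `binom(n+α, n−m) = (∏_{j=0}^{n−m−1} (n+α−j))/(n−m)!`. -/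
noncomputable def genBinom (α : ℝ) (n m : ℕ) : ℝ :=
  (∏ j ∈ Finset.range (n - m), ((n : ℝ) + α - (j : ℝ))) / (Nat.factorial (n - m) : ℝ)

/-- The degenerate generalized Laguerre polynomial `L^{(α)}_{n,λ}(x)`. -/
noncomputable def degLaguerre (lam α : ℝ) (n : ℕ) (x : ℝ) : ℝ :=
  ∑ m ∈ Finset.range (n + 1),
    genBinom α n m * (-1 : ℝ) ^ m * degFall lam m * x ^ m / (Nat.factorial m : ℝ)

lemma degFall_succ' (lam : ℝ) (m : ℕ) :
    degFall lam (m + 1) = degFall lam m * (1 - (m : ℝ) * lam) :=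
  Finset.prod_range_succ _ _

lemma genBinom_pascal (α : ℝ) (p k : ℕ) (hk : k < p) :
    genBinom α (p + 1) (k + 1) = genBinom α p (k + 1) + genBinom α p k := by
  obtain ⟨s, hs⟩ : ∃ s, p - k = s + 1 := ⟨p - k - 1, by omega⟩
  have h1 : (p + 1) - (k + 1) = s + 1 := by omega
  have h2 : p - (k + 1) = s := by omega
  unfold genBinom
  rw [h1, h2, hs]
  have e1 : (∏ j ∈ Finset.range (s+1), (((p+1:ℕ) : ℝ) + α - (j:ℝ)))
      = (∏ j ∈ Finset.range s, ((p:ℝ) + α - (j:ℝ))) * ((p:ℝ) + 1 + α) := by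
    rw [Finset.prod_range_succ' (fun j => ((p+1:ℕ):ℝ) + α - (j:ℝ)) s]
    congr 1
    · exact Finset.prod_congr rfl (fun j _ => by push_cast; ring)
    · push_cast; ring
  have e2 : (∏ j ∈ Finset.range (s+1), ((p:ℝ) + α - (j:ℝ)))
      = (∏ j ∈ Finset.range s, ((p:ℝ) + α - (j:ℝ))) * ((p:ℝ) + α - s) :=
    Finset.prod_range_succ _ _
  rw [e1, e2]
  have hf : ((s+1).factorial : ℝ) = (s+1) * (s.factorial : ℝ) := by
    push_cast [Nat.factorial_succ]; ring
  have hs0 : (s.factorial : ℝ) ≠ 0 := Nat.cast_ne_zero.mpr (Nat.factorial_ne_zero s)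
  rw [hf]
  field_simp
  ring

lemma genBinom_self (α : ℝ) (q : ℕ) : genBinom α q q = 1 := by
  simp [genBinom]

lemma degLaguerre_hasDerivAt (lam α : ℝ) (n : ℕ) (x : ℝ) :
    HasDerivAt (degLaguerre lam α n)
      (∑ m ∈ Finset.range (n + 1),
        genBinom α n m * (-1 : ℝ) ^ m * degFall lam m * ((m : ℝ) * x ^ (m - 1))
          / (Nat.factorial m : ℝ)) x := by
  show HasDerivAt (fun x => ∑ m ∈ Finset.range (n + 1),
      genBinom α n m * (-1 : ℝ) ^ m * degFall lam m * x ^ m / (Nat.factorial m : ℝ)) _ x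
  apply HasDerivAt.fun_sum
  intro m _
  exact ((hasDerivAt_pow m x).const_mul _).div_const _

/-- Corollary 7, first identity:
`(d/dx) L^{(α)}_{n,λ}(x) = (1 + xλ) (d/dx) L^{(α)}_{n−1,λ}(x) − L^{(α)}_{n−1,λ}(x)` for `n ≥ 1`. -/
theorem degLaguerre_deriv_recurrence (lam α : ℝ) (n : ℕ) (hn : 1 ≤ n) (x : ℝ) :
    deriv (degLaguerre lam α n) x =
      (1 + x * lam) * deriv (degLaguerre lam α (n - 1)) x - degLaguerre lam α (n - 1) x := by
  obtain ⟨p, rfl⟩ : ∃ p, n = p + 1 := ⟨n - 1, by omega⟩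
  have hred : p + 1 - 1 = p := rfl
  rw [hred, (degLaguerre_hasDerivAt lam α (p+1) x).deriv,
      (degLaguerre_hasDerivAt lam α p x).deriv]
  have hfac : ∀ k : ℕ, ((k+1).factorial : ℝ) = ((k:ℝ)+1) * (k.factorial : ℝ) := by
    intro k; push_cast [Nat.factorial_succ]; ring
  have hfne : ∀ k : ℕ, (k.factorial : ℝ) ≠ 0 :=
    fun k => Nat.cast_ne_zero.mpr (Nat.factorial_ne_zero k)
  have hterm : ∀ (q k : ℕ),
      genBinom α q (k+1) * (-1:ℝ)^(k+1) * degFall lam (k+1) * (((k+1:ℕ):ℝ) * x^((k+1)-1))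
        / ((k+1).factorial : ℝ)
      = genBinom α q (k+1) * (-1:ℝ)^(k+1) * degFall lam (k+1) * x^k / (k.factorial : ℝ) := by
    intro q k
    rw [hfac k]
    have h1 : (k+1) - 1 = k := rfl
    rw [h1]
    push_cast
    have hk1 : ((k:ℝ)+1) ≠ 0 := by positivity
    field_simp
  -- rewrite LHS sum
  have hL : (∑ m ∈ Finset.range (p+1+1),
      genBinom α (p+1) m * (-1:ℝ)^m * degFall lam m * ((m:ℝ) * x^(m-1))
        / (m.factorial : ℝ))
      = ∑ k ∈ Finset.range (p+1),
        genBinom α (p+1) (k+1) * (-1:ℝ)^(k+1) * degFall lam (k+1) * x^k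
          / (k.factorial : ℝ) := by
    rw [Finset.sum_range_succ']
    simp only [Nat.cast_zero, zero_mul, mul_zero, zero_div, add_zero]
    exact Finset.sum_congr rfl fun k _ => hterm (p+1) k
  -- rewrite RHS deriv sum
  have hR : (∑ m ∈ Finset.range (p+1),
      genBinom α p m * (-1:ℝ)^m * degFall lam m * ((m:ℝ) * x^(m-1))
        / (m.factorial : ℝ))
      = ∑ k ∈ Finset.range p,
        genBinom α p (k+1) * (-1:ℝ)^(k+1) * degFall lam (k+1) * x^k
          / (k.factorial : ℝ) := by
    rw [Finset.sum_range_succ']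
    simp only [Nat.cast_zero, zero_mul, mul_zero, zero_div, add_zero]
    exact Finset.sum_congr rfl fun k _ => hterm p k
  rw [hL, hR]
  simp only [degLaguerre]
  -- the x*lam part, reindexed
  have hxl : x * lam * (∑ k ∈ Finset.range p,
        genBinom α p (k+1) * (-1:ℝ)^(k+1) * degFall lam (k+1) * x^k / (k.factorial : ℝ))
      = ∑ m ∈ Finset.range (p+1),
        ((m:ℝ) * lam) * (genBinom α p m * (-1:ℝ)^m * degFall lam m * x^m
          / (m.factorial : ℝ)) := by
    rw [Finset.sum_range_succ']
    simp only [Nat.cast_zero, zero_mul]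
    rw [add_zero, Finset.mul_sum]
    refine Finset.sum_congr rfl fun k _ => ?_
    rw [hfac k]
    push_cast
    have hk1 : ((k:ℝ)+1) ≠ 0 := by positivity
    field_simp
    ring
  rw [add_mul, one_mul, hxl, sub_eq_add_neg, ← Finset.sum_neg_distrib, add_assoc,
      ← Finset.sum_add_distrib]
  rw [Finset.sum_range_succ, Finset.sum_range_succ]
  have hstep : ∀ k ∈ Finset.range p,
      genBinom α (p+1) (k+1) * (-1:ℝ)^(k+1) * degFall lam (k+1) * x^k / (k.factorial : ℝ)
      = genBinom α p (k+1) * (-1:ℝ)^(k+1) * degFall lam (k+1) * x^k / (k.factorial : ℝ)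
        + ((k:ℝ) * lam * (genBinom α p k * (-1:ℝ)^k * degFall lam k * x^k / (k.factorial : ℝ))
          + -(genBinom α p k * (-1:ℝ)^k * degFall lam k * x^k / (k.factorial : ℝ))) := by
    intro k hk
    rw [genBinom_pascal α p k (Finset.mem_range.mp hk), degFall_succ']
    ring
  have hlast :
      genBinom α (p+1) (p+1) * (-1:ℝ)^(p+1) * degFall lam (p+1) * x^p / (p.factorial : ℝ)
      = (p:ℝ) * lam * (genBinom α p p * (-1:ℝ)^p * degFall lam p * x^p / (p.factorial : ℝ))
        + -(genBinom α p p * (-1:ℝ)^p * degFall lam p * x^p / (p.factorial : ℝ)) := by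
    rw [genBinom_self, genBinom_self, degFall_succ']
    ring
  rw [Finset.sum_congr rfl hstep, Finset.sum_add_distrib, hlast]
  ring
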